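/- Let H be an acceptable Hintikka set and s, t closed terms of the same type. If the Leibniz equation (s ≐ t) ∈ H, then the primitive equation (s = t) ∈ H. -/

import Mathlib

namespace HintikkaHOL

/-- Simple types over base types `o` (Booleans) and `i` (individuals). -/
inductive Ty : Type
  | o : Ty
  | i : Ty
  | arr : Ty → Ty → Ty
deriving DecidableEq

open Ty

/-- Typed de Bruijn variables. -/
inductive Var : List Ty → Ty → Type
  | vz {Γ τ} : Var (τ :: Γ) τ
  | vs {Γ σ τ} : Var Γ τ → Var (σ :: Γ) τ

/-- Terms of Church's type theory over a signature `S` of parameters,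
with primitive equality `eq τ : τ → τ → o` as the only logical constant. -/
inductive Tm (S : Ty → Type) : List Ty → Ty → Type
  | var {Γ τ} : Var Γ τ → Tm S Γ τ
  | par {Γ τ} : S τ → Tm S Γ τ
  | eq {Γ} (τ : Ty) : Tm S Γ (arr τ (arr τ o))
  | app {Γ a b} : Tm S Γ (arr a b) → Tm S Γ a → Tm S Γ b
  | lam {Γ a b} : Tm S (a :: Γ) b → Tm S Γ (arr a b)

variable {S : Ty → Type}

/-- Renamings. -/
abbrev Ren (Γ Δ : List Ty) : Type := ∀ τ, Var Γ τ → Var Δ τ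

def Ren.lift {Γ Δ} (r : Ren Γ Δ) (σ : Ty) : Ren (σ :: Γ) (σ :: Δ)
  | _, .vz => .vz
  | _, .vs w => .vs (r _ w)

def rename {Γ Δ} (r : Ren Γ Δ) : ∀ {τ}, Tm S Γ τ → Tm S Δ τ
  | _, .var v => .var (r _ v)
  | _, .par p => .par p
  | _, .eq τ => .eq τ
  | _, .app f a => .app (rename r f) (rename r a)
  | _, .lam b => .lam (rename (Ren.lift r _) b)

/-- Substitutions. -/
abbrev Sub (S : Ty → Type) (Γ Δ : List Ty) : Type := ∀ τ, Var Γ τ → Tm S Δ τ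

def Sub.lift {Γ Δ} (s : Sub S Γ Δ) (σ : Ty) : Sub S (σ :: Γ) (σ :: Δ)
  | _, .vz => .var .vz
  | _, .vs w => rename (fun _ u => Var.vs u) (s _ w)

def subst {Γ Δ} (s : Sub S Γ Δ) : ∀ {τ}, Tm S Γ τ → Tm S Δ τ
  | _, .var v => s _ v
  | _, .par p => .par p
  | _, .eq τ => .eq τ
  | _, .app f a => .app (subst s f) (subst s a)
  | _, .lam b => .lam (subst (Sub.lift s _) b)

/-- The substitution sending the outermost variable to `a`. -/
def Sub.single {Γ σ} (a : Tm S Γ σ) : Sub S (σ :: Γ) Γ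
  | _, .vz => a
  | _, .vs w => .var w

def subst1 {Γ σ τ} (a : Tm S Γ σ) (b : Tm S (σ :: Γ) τ) : Tm S Γ τ :=
  subst (Sub.single a) b

/-- Weakening of a closed term into any context. -/
def Ren.fromEmpty {Γ} : Ren [] Γ := fun _ v => nomatch v

def wk0 {Γ τ} (t : Tm S [] τ) : Tm S Γ τ :=
  rename Ren.fromEmpty t

/-- The equation `s =^τ t`. -/
def eqT {Γ} (τ : Ty) (s t : Tm S Γ τ) : Tm S Γ o :=
  .app (.app (.eq τ) s) t

/-- `⊤ := (=^o) =^{ooo} (=^o)`. -/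
def topT {Γ} : Tm S Γ o :=
  eqT (arr o (arr o o)) (.eq o) (.eq o)

/-- `⊥ := (λP:o. P) =^{oo} (λP:o. ⊤)`. -/
def botT {Γ} : Tm S Γ o :=
  eqT (arr o o) (.lam (.var .vz)) (.lam topT)

/-- `¬ := λP:o. P =^o ⊥`. -/
def notC {Γ} : Tm S Γ (arr o o) :=
  .lam (eqT o (.var .vz) botT)

/-- `¬ s`. -/
def negT {Γ} (s : Tm S Γ o) : Tm S Γ o :=
  .app notC s

/-- `∧ := λP Q. (λF:ooo. F ⊤ ⊤) =^{o(ooo)} (λF. F P Q)`. -/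
def andC {Γ} : Tm S Γ (arr o (arr o o)) :=
  .lam (.lam (eqT (arr (arr o (arr o o)) o)
    (.lam (.app (.app (.var .vz) topT) topT))
    (.lam (.app (.app (.var .vz) (.var (.vs (.vs .vz)))) (.var (.vs .vz))))))

/-- `∨ := λP Q. ¬(¬P ∧ ¬Q)`. -/
def orC {Γ} : Tm S Γ (arr o (arr o o)) :=
  .lam (.lam (negT (.app (.app andC (negT (.var (.vs .vz)))) (negT (.var .vz)))))

/-- `⇒ := λP Q. ¬P ∨ Q`. -/
def impC {Γ} : Tm S Γ (arr o (arr o o)) :=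
  .lam (.lam (.app (.app orC (negT (.var (.vs .vz)))) (.var .vz)))

/-- `Π^τ := λP:oτ. P =^{oτ} (λX:τ. ⊤)`. -/
def piC {Γ} (τ : Ty) : Tm S Γ (arr (arr τ o) o) :=
  .lam (eqT (arr τ o) (.var .vz) (.lam topT))

/-- Leibniz equality `s ≐ t := Π^{oτ} (λP:oτ. (P s) ⇒ (P t))`. -/
def leibT {Γ τ} (s t : Tm S Γ τ) : Tm S Γ o :=
  .app (piC (arr τ o))
    (.lam (.app (.app impC (.app (.var .vz) (rename (fun _ v => Var.vs v) s)))
                (.app (.var .vz) (rename (fun _ v => Var.vs v) t))))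

/-- βη-conversion. -/
inductive Conv : ∀ {Γ : List Ty} {τ : Ty}, Tm S Γ τ → Tm S Γ τ → Prop
  | refl {Γ τ} (s : Tm S Γ τ) : Conv s s
  | symm {Γ τ} {s t : Tm S Γ τ} : Conv s t → Conv t s
  | trans {Γ τ} {s t u : Tm S Γ τ} : Conv s t → Conv t u → Conv s u
  | appCongr {Γ a b} {f f' : Tm S Γ (arr a b)} {s s' : Tm S Γ a} :
      Conv f f' → Conv s s' → Conv (.app f s) (.app f' s')
  | lamCongr {Γ a b} {s s' : Tm S (a :: Γ) b} :
      Conv s s' → Conv (.lam s) (.lam s')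
  | beta {Γ a b} (body : Tm S (a :: Γ) b) (s : Tm S Γ a) :
      Conv (.app (.lam body) s) (subst1 s body)
  | eta {Γ a b} (f : Tm S Γ (arr a b)) :
      Conv (.lam (.app (rename (fun _ v => Var.vs v) f) (.var .vz))) f

/-- Atomic formulas: head symbol is a parameter (or a variable). -/
inductive Atomic : ∀ {Γ : List Ty} {τ : Ty}, Tm S Γ τ → Prop
  | par {Γ τ} (p : S τ) : Atomic (Tm.par (Γ := Γ) p)
  | var {Γ τ} (v : Var Γ τ) : Atomic (Tm.var (S := S) v)
  | app {Γ a b} {f : Tm S Γ (arr a b)} {s : Tm S Γ a} : Atomic f → Atomic (.app f s)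

/-- Paired spines of closed arguments, for the decomposition property `∇_d`:
a value of `Spine2 S σ τ` is a list of pairs `(sⁱ, tⁱ)` of closed terms turning a head
of type `σ` into two applications `h s¹ … sⁿ` and `h t¹ … tⁿ` of type `τ`. -/
inductive Spine2 (S : Ty → Type) : Ty → Ty → Type
  | nil {τ} : Spine2 S τ τ
  | cons {a σ τ} (s t : Tm S [] a) (rest : Spine2 S σ τ) : Spine2 S (arr a σ) τ

def appSpineL : ∀ {σ τ}, Tm S [] σ → Spine2 S σ τ → Tm S [] τ
  | _, _, h, .nil => h
  | _, _, h, .cons s _ rest => appSpineL (.app h s) rest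

def appSpineR : ∀ {σ τ}, Tm S [] σ → Spine2 S σ τ → Tm S [] τ
  | _, _, h, .nil => h
  | _, _, h, .cons _ t rest => appSpineR (.app h t) rest

/-- `∃ i, (sⁱ ≠ tⁱ) ∈ H` for a paired spine. -/
def ExistsNeq (H : Set (Tm S [] o)) : ∀ {σ τ}, Spine2 S σ τ → Prop
  | _, _, .nil => False
  | _, _, .cons (a := a) s t rest => negT (eqT a s t) ∈ H ∨ ExistsNeq H rest

/-- Steen's acceptable Hintikka sets: sets of closed formulas (sentences) satisfying
the ten properties `∇_c, ∇_βη, ∇_=^r, ∇_=^s, ∇_b^+, ∇_b^-, ∇_f^+, ∇_f^-, ∇_m, ∇_d`. -/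
structure Acceptable (S : Ty → Type) (H : Set (Tm S [] o)) : Prop where
  nabla_c : ∀ s : Tm S [] o, ¬ (s ∈ H ∧ negT s ∈ H)
  nabla_betaEta : ∀ s t : Tm S [] o, Conv s t → s ∈ H → t ∈ H
  nabla_eq_r : ∀ {τ} (s : Tm S [] τ), negT (eqT τ s s) ∉ H
  nabla_eq_s : ∀ {τ} (u : Tm S [τ] o) (s t : Tm S [] τ),
      subst1 s u ∈ H → eqT τ s t ∈ H → subst1 t u ∈ H
  nabla_b_pos : ∀ s t : Tm S [] o, eqT o s t ∈ H →
      (s ∈ H ∧ t ∈ H) ∨ (negT s ∈ H ∧ negT t ∈ H)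
  nabla_b_neg : ∀ s t : Tm S [] o, negT (eqT o s t) ∈ H →
      (s ∈ H ∧ negT t ∈ H) ∨ (negT s ∈ H ∧ t ∈ H)
  nabla_f_pos : ∀ {a b} (f g : Tm S [] (arr a b)), eqT (arr a b) f g ∈ H →
      ∀ s : Tm S [] a, eqT b (.app f s) (.app g s) ∈ H
  nabla_f_neg : ∀ {a b} (f g : Tm S [] (arr a b)), negT (eqT (arr a b) f g) ∈ H →
      ∃ w : S a, negT (eqT b (.app f (.par w)) (.app g (.par w))) ∈ H
  nabla_m : ∀ s t : Tm S [] o, Atomic s → Atomic t → s ∈ H → negT t ∈ H →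
      negT (eqT o s t) ∈ H
  nabla_d : ∀ {σ τ} (h : Tm S [] σ) (sp : Spine2 S σ τ),
      negT (eqT τ (appSpineL h sp) (appSpineR h sp)) ∈ H → ExistsNeq H sp

/-- `H` is saturated iff `s ∈ H` or `¬s ∈ H` for every closed formula `s`. -/
def Saturated (H : Set (Tm S [] o)) : Prop :=
  ∀ s : Tm S [] o, s ∈ H ∨ negT s ∈ H

variable {S : Ty → Type} {H : Set (Tm S [] Ty.o)}


/-! ### Auxiliary substitution lemmas -/

theorem conv_of_eq {Γ τ} {s t : Tm S Γ τ} (h : s = t) : Conv s t := h ▸ Conv.refl s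

theorem Conv.beta' {Γ a b} {body : Tm S (a :: Γ) b} {s : Tm S Γ a} {u : Tm S Γ b}
    (h : subst1 s body = u) : Conv (.app (.lam body) s) u := h ▸ Conv.beta body s

theorem ren_empty_eq {Γ} (r r' : Ren [] Γ) : r = r' :=
  funext fun _ => funext fun v => nomatch v

theorem sub_empty_eq {Γ} (σ σ' : Sub S [] Γ) : σ = σ' :=
  funext fun _ => funext fun v => nomatch v

theorem rename_rename : ∀ {Γ τ} (t : Tm S Γ τ) {Δ E : List Ty} (r₁ : Ren Γ Δ) (r₂ : Ren Δ E),
    rename r₂ (rename r₁ t) = rename (fun τ v => r₂ τ (r₁ τ v)) t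
  | _, _, .var v, _, _, r₁, r₂ => rfl
  | _, _, .par p, _, _, r₁, r₂ => rfl
  | _, _, .eq τ, _, _, r₁, r₂ => rfl
  | _, _, .app f a, _, _, r₁, r₂ => by
      simp only [rename, rename_rename]
  | _, _, .lam b, _, _, r₁, r₂ => by
      simp only [rename, rename_rename]
      congr 1
      congr 1
      funext τ v
      cases v <;> rfl

theorem subst_rename : ∀ {Γ τ} (t : Tm S Γ τ) {Δ E : List Ty} (r : Ren Γ Δ) (σ : Sub S Δ E),
    subst σ (rename r t) = subst (fun τ v => σ τ (r τ v)) t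
  | _, _, .var v, _, _, r, σ => rfl
  | _, _, .par p, _, _, r, σ => rfl
  | _, _, .eq τ, _, _, r, σ => rfl
  | _, _, .app f a, _, _, r, σ => by
      simp only [rename, subst, subst_rename]
  | _, _, .lam b, _, _, r, σ => by
      simp only [rename, subst, subst_rename]
      congr 1
      congr 1
      funext τ v
      cases v <;> rfl

theorem subst_eq_rename : ∀ {Γ τ} (t : Tm S Γ τ) {Δ : List Ty} (r : Ren Γ Δ),
    subst (fun τ v => .var (r τ v)) t = rename r t
  | _, _, .var v, _, r => rfl
  | _, _, .par p, _, r => rfl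
  | _, _, .eq τ, _, r => rfl
  | _, _, .app f a, _, r => by
      simp only [rename, subst, subst_eq_rename]
  | _, _, .lam b, _, r => by
      simp only [rename, subst]
      congr 1
      rw [show (Sub.lift (S := S) (fun τ v => .var (r τ v)) _) = (fun τ v => .var (Ren.lift r _ τ v)) from ?_]
      · exact subst_eq_rename b _
      · funext τ v; cases v <;> rfl

theorem rename_id : ∀ {Γ τ} (t : Tm S Γ τ), rename (fun _ v => v) t = t
  | _, _, .var v => rfl
  | _, _, .par p => rfl
  | _, _, .eq τ => rfl
  | _, _, .app f a => by simp only [rename, rename_id]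
  | _, _, .lam b => by
      simp only [rename]
      congr 1
      rw [show (Ren.lift (Γ := _) (fun _ v => v) _) = (fun (_ : Ty) v => v) from ?_]
      · exact rename_id b
      · funext τ v; cases v <;> rfl

theorem closed_rename {Γ τ} (t : Tm S [] τ) (r : Ren [] Γ) : rename r t = wk0 t := by
  rw [ren_empty_eq r Ren.fromEmpty]; rfl

theorem wk0_nil {τ} (t : Tm S [] τ) : wk0 (Γ := []) t = t := by
  rw [wk0, ren_empty_eq Ren.fromEmpty (fun _ v => v), rename_id]

theorem closed_subst {Γ τ} (t : Tm S [] τ) (σ : Sub S [] Γ) : subst σ t = wk0 t := by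
  rw [sub_empty_eq σ (fun τ v => .var (Ren.fromEmpty τ v)), subst_eq_rename]; rfl

theorem subst_wk0 {Γ Δ τ} (t : Tm S [] τ) (σ : Sub S Γ Δ) : subst σ (wk0 t) = wk0 t := by
  rw [wk0, subst_rename, closed_subst]

theorem rename_wk0 {Γ Δ τ} (t : Tm S [] τ) (r : Ren Γ Δ) : rename r (wk0 t) = wk0 t := by
  rw [wk0, rename_rename, closed_rename]

example {Γ Δ} (σ : Sub S Γ Δ) : subst σ impC = impC := rfl
example {Γ Δ} (σ : Sub S Γ Δ) : subst σ notC = notC := rfl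
example {Γ Δ} (σ : Sub S Γ Δ) : subst σ andC = andC := rfl
example {Γ Δ} (σ : Sub S Γ Δ) : subst σ orC = orC := rfl
example {Γ Δ} (σ : Sub S Γ Δ) : subst σ (topT) = topT := rfl
example {Γ Δ} (σ : Sub S Γ Δ) : subst σ (botT) = botT := rfl


theorem subst_impC {Γ Δ} (σ : Sub S Γ Δ) : subst σ impC = impC := rfl
theorem subst_orC {Γ Δ} (σ : Sub S Γ Δ) : subst σ orC = orC := rfl
theorem subst_andC {Γ Δ} (σ : Sub S Γ Δ) : subst σ andC = andC := rfl
theorem subst_notC {Γ Δ} (σ : Sub S Γ Δ) : subst σ notC = notC := rfl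
theorem subst_topT {Γ Δ} (σ : Sub S Γ Δ) : subst σ topT = topT := rfl
theorem subst_botT {Γ Δ} (σ : Sub S Γ Δ) : subst σ botT = botT := rfl
theorem subst_negT {Γ Δ} (σ : Sub S Γ Δ) (z : Tm S Γ o) :
    subst σ (negT z) = negT (subst σ z) := rfl
theorem subst_eqT {Γ Δ τ} (σ : Sub S Γ Δ) (a b : Tm S Γ τ) :
    subst σ (eqT τ a b) = eqT τ (subst σ a) (subst σ b) := rfl

theorem conv_negT {Γ} {s s' : Tm S Γ o} (h : Conv s s') : Conv (negT s) (negT s') :=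
  Conv.appCongr (Conv.refl _) h

theorem conv_eqT {Γ τ} {s s' t t' : Tm S Γ τ} (hs : Conv s s') (ht : Conv t t') :
    Conv (eqT τ s t) (eqT τ s' t') := Conv.appCongr (Conv.appCongr (Conv.refl _) hs) ht

/-- `¬D` converts to `D = ⊥`. -/
theorem conv_not {Γ} (D : Tm S Γ o) : Conv (negT D) (eqT o D botT) := Conv.beta' rfl

theorem negTop_notin (hH : Acceptable S H) : negT topT ∉ H := hH.nabla_eq_r (Tm.eq Ty.o)

theorem bot_notin (hH : Acceptable S H) : botT ∉ H := by
  intro hb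
  have hb' : eqT (arr o o) (.lam (.var .vz)) (.lam topT) ∈ H := hb
  have h1 := hH.nabla_f_pos _ _ hb' (negT topT)
  have h2 : eqT o (negT topT) topT ∈ H := by
    refine hH.nabla_betaEta _ _ ?_ h1
    exact conv_eqT (Conv.beta' rfl) (Conv.beta' rfl)
  rcases hH.nabla_b_pos _ _ h2 with ⟨h3, _⟩ | ⟨_, h3⟩ <;> exact negTop_notin hH h3

/-- Double negation elimination inside `H`. -/
theorem dne (hH : Acceptable S H) (P : Tm S [] Ty.o) (h : negT (negT P) ∈ H) : P ∈ H := by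
  have h1 : eqT o (eqT o P botT) botT ∈ H :=
    hH.nabla_betaEta _ _
      (Conv.trans (conv_not (negT P)) (conv_eqT (conv_not P) (Conv.refl _))) h
  rcases hH.nabla_b_pos _ _ h1 with ⟨_, hb⟩ | ⟨h2, _⟩
  · exact absurd hb (bot_notin hH)
  rcases hH.nabla_b_neg _ _ h2 with ⟨hp, _⟩ | ⟨_, hb⟩
  · exact hp
  · exact absurd hb (bot_notin hH)


theorem subst_ren0 {Γ Δ τ} (σ : Sub S Γ Δ) (u : Tm S [] τ) :
    subst σ (rename Ren.fromEmpty u) = rename Ren.fromEmpty u := by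
  rw [subst_rename, closed_subst]; rfl

theorem rename_ren0 {Γ Δ τ} (r : Ren Γ Δ) (u : Tm S [] τ) :
    rename r (rename Ren.fromEmpty u) = rename Ren.fromEmpty u := by
  rw [rename_rename, closed_rename]; rfl

theorem vs_closed {a τ} (u : Tm S [] τ) :
    rename (fun τ' (v : Var [] τ') => Var.vs (σ := a) v) u = rename Ren.fromEmpty u := by
  rw [ren_empty_eq (fun τ' (v : Var [] τ') => Var.vs (σ := a) v) Ren.fromEmpty]

theorem ren0_nil {τ} (u : Tm S [] τ) : rename (Ren.fromEmpty (Γ := [])) u = u := by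
  rw [ren_empty_eq (Ren.fromEmpty (Γ := [])) (fun _ v => v), rename_id]

/-- If the Leibniz equation `(s ≐ t) ∈ H`, then the primitive equation `(s = t) ∈ H`. -/

theorem leib_to_eq_mem (hH : Acceptable S H) {τ : Ty} (s t : Tm S [] τ)
    (h : leibT s t ∈ H) : eqT τ s t ∈ H := by
  classical
  -- the predicate argument of Π in the Leibniz equation, with closed `s`, `t` weakened
  set q : Tm S [] (arr (arr τ o) o) :=
    .lam (.app (.app impC (.app (.var .vz) (rename Ren.fromEmpty s)))
               (.app (.var .vz) (rename Ren.fromEmpty t))) with hq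
  -- Step 1: β-reduce the Π-redex
  have h1 : eqT (arr (arr τ o) o) q (.lam topT) ∈ H := by
    refine hH.nabla_betaEta _ _ ?_ h
    have e : leibT s t = Tm.app (piC (arr τ o)) q := by
      simp only [leibT, hq, vs_closed] <;> rfl
    rw [e]
    exact Conv.beta' rfl
  -- Step 2: apply functional extensionality with the predicate `λx. s = x`
  set r : Tm S [] (arr τ o) := .lam (eqT τ (rename Ren.fromEmpty s) (.var .vz)) with hr
  have h2 := hH.nabla_f_pos _ _ h1 r
  -- conversions for `r s` and `r t`
  have cA : Conv (Tm.app r s) (eqT τ s s) := by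
    rw [hr]
    refine Conv.beta' ?_
    simp only [subst1, subst, Sub.single, Sub.lift, rename, Ren.lift, subst_ren0,
      rename_ren0, vs_closed, ren0_nil, subst_eqT, subst_negT, subst_orC, subst_andC, subst_impC, subst_notC, subst_topT, subst_botT] <;> rfl
  have cB : Conv (Tm.app r t) (eqT τ s t) := by
    rw [hr]
    refine Conv.beta' ?_
    simp only [subst1, subst, Sub.single, Sub.lift, rename, Ren.lift, subst_ren0,
      rename_ren0, vs_closed, ren0_nil, subst_eqT, subst_negT, subst_orC, subst_andC, subst_impC, subst_notC, subst_topT, subst_botT] <;> rfl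
  set A : Tm S [] o := eqT τ s s with hA
  set B : Tm S [] o := eqT τ s t with hB
  -- Step 3: β-reduce to an implication
  have h3 : eqT o (.app (.app impC A) B) topT ∈ H := by
    refine hH.nabla_betaEta _ _ ?_ h2
    refine conv_eqT ?_ (Conv.beta' rfl)
    refine Conv.trans (Conv.beta' (u := .app (.app impC (.app r s)) (.app r t)) ?_) ?_
    · simp only [subst1, subst, Sub.single, Sub.lift, rename, Ren.lift, subst_ren0,
        rename_ren0, vs_closed, ren0_nil] <;> rfl
    · exact Conv.appCongr (Conv.appCongr (Conv.refl _) cA) cB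
  rcases hH.nabla_b_pos _ _ h3 with ⟨h4, _⟩ | ⟨_, hnt⟩
  swap
  · exact absurd hnt (negTop_notin hH)
  -- Step 4: unfold the implication into `¬(¬¬A ∧ ¬B)`
  set D : Tm S [] o := .app (.app andC (negT (negT A))) (negT B) with hD
  have h5 : negT D ∈ H := by
    refine hH.nabla_betaEta _ _ ?_ h4
    refine Conv.trans (Conv.appCongr
      (Conv.beta' (u := .lam (.app (.app orC (negT (rename Ren.fromEmpty A))) (.var .vz)))
        ?_) (Conv.refl B)) ?_
    · simp only [subst1, subst, Sub.single, Sub.lift, rename, Ren.lift, subst_ren0,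
        rename_ren0, vs_closed, ren0_nil, subst_eqT, subst_negT, subst_orC, subst_andC, subst_impC, subst_notC, subst_topT, subst_botT] <;> rfl
    refine Conv.trans (Conv.beta' (u := .app (.app orC (negT A)) B) ?_) ?_
    · simp only [subst1, subst, Sub.single, Sub.lift, rename, Ren.lift, subst_ren0,
        rename_ren0, vs_closed, ren0_nil, subst_eqT, subst_negT, subst_orC, subst_andC, subst_impC, subst_notC, subst_topT, subst_botT] <;> rfl
    refine Conv.trans (Conv.appCongr
      (Conv.beta' (u := .lam (negT (.app (.app andC (negT (rename Ren.fromEmpty (negT A))))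
        (negT (.var .vz))))) ?_) (Conv.refl B)) ?_
    · simp only [subst1, subst, Sub.single, Sub.lift, rename, Ren.lift, subst_ren0,
        rename_ren0, vs_closed, ren0_nil, subst_eqT, subst_negT, subst_orC, subst_andC, subst_impC, subst_notC, subst_topT, subst_botT] <;> rfl
    refine Conv.beta' ?_
    simp only [hD, subst1, subst, Sub.single, Sub.lift, rename, Ren.lift, subst_ren0,
      rename_ren0, vs_closed, ren0_nil, subst_eqT, subst_negT, subst_orC, subst_andC, subst_impC, subst_notC, subst_topT, subst_botT] <;> rfl
  -- Step 5: unfold the conjunction into a function equation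
  set g1 : Tm S [] (arr (arr o (arr o o)) o) := .lam (.app (.app (.var .vz) topT) topT) with hg1
  set g2 : Tm S [] (arr (arr o (arr o o)) o) :=
    .lam (.app (.app (.var .vz) (rename Ren.fromEmpty (negT (negT A))))
               (rename Ren.fromEmpty (negT B))) with hg2
  have h6 : eqT o (eqT (arr (arr o (arr o o)) o) g1 g2) botT ∈ H := by
    refine hH.nabla_betaEta _ _ ?_ h5
    refine Conv.trans (conv_not D) (conv_eqT ?_ (Conv.refl _))
    rw [hD, hg1, hg2]
    refine Conv.trans (Conv.appCongr (Conv.beta'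
      (u := .lam (eqT (arr (arr o (arr o o)) o)
        (.lam (.app (.app (.var .vz) topT) topT))
        (.lam (.app (.app (.var .vz) (rename Ren.fromEmpty (negT (negT A))))
          (.var (.vs .vz)))))) ?_)
      (Conv.refl (negT B))) ?_
    · simp only [subst1, subst, Sub.single, Sub.lift, rename, Ren.lift, subst_ren0,
        rename_ren0, vs_closed, ren0_nil, subst_eqT, subst_negT, subst_orC, subst_andC, subst_impC, subst_notC, subst_topT, subst_botT] <;> rfl
    refine Conv.beta' ?_
    simp only [subst1, subst, Sub.single, Sub.lift, rename, Ren.lift, subst_ren0,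
      rename_ren0, vs_closed, ren0_nil, subst_eqT, subst_negT, subst_orC, subst_andC, subst_impC, subst_notC, subst_topT, subst_botT] <;> rfl
  rcases hH.nabla_b_pos _ _ h6 with ⟨_, hb⟩ | ⟨h7, _⟩
  · exact absurd hb (bot_notin hH)
  -- Step 6: functional extensionality (negative) gives a witness parameter
  obtain ⟨w, hw⟩ := hH.nabla_f_neg g1 g2 h7
  have hw' : negT (eqT o (.app (.app (.par w) topT) topT)
      (.app (.app (.par w) (negT (negT A))) (negT B))) ∈ H := by
    refine hH.nabla_betaEta _ _ ?_ hw
    refine conv_negT (conv_eqT ?_ ?_)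
    · rw [hg1]; exact Conv.beta' rfl
    · rw [hg2]
      refine Conv.beta' ?_
      simp only [subst1, subst, Sub.single, Sub.lift, rename, Ren.lift, subst_ren0,
        rename_ren0, vs_closed, ren0_nil] <;> rfl
  -- Step 7: decomposition
  have h10 := hH.nabla_d (.par w)
    (.cons topT (negT (negT A)) (.cons topT (negT B) .nil)) hw'
  have h10' : negT (eqT o topT (negT (negT A))) ∈ H ∨
      (negT (eqT o topT (negT B)) ∈ H ∨ False) := h10
  have key : ∀ Z : Tm S [] o, negT (eqT o topT Z) ∈ H → negT Z ∈ H := by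
    intro Z hz
    rcases hH.nabla_b_neg _ _ hz with ⟨_, hk⟩ | ⟨hk, _⟩
    · exact hk
    · exact absurd hk (negTop_notin hH)
  rcases h10' with hc | hc | hc
  · exact absurd (dne hH (negT A) (key _ hc)) (hH.nabla_eq_r s)
  · exact dne hH B (key _ hc)
  · exact hc.elim

end HintikkaHOL
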